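/- (Riemenschneider duality) Let p > q ≥ 1 be coprime, let q' = p − q, and let p/q = [e_1, …, e_k] and p/q' = [e'_1, …, e'_{k'}] be the Hirzebruch–Jung continued fraction expansions. Then ∑_{i=1}^{k} (e_i − 1) = ∑_{i=1}^{k'} (e'_i − 1), and k' = 1 + ∑_{i=1}^{k} (e_i − 2). -/

import Mathlib

/-- The Hirzebruch–Jung (negative) continued fraction `[e₁, …, e_k]`,
defined by `[e_k] = e_k` and `[e₁, …, e_k] = e₁ - 1/[e₂, …, e_k]`. -/
def hjcf : List ℤ → ℚ
  | [] => 0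
  | [e] => (e : ℚ)
  | e :: rest => (e : ℚ) - 1 / hjcf rest

lemma hjcf_cons (e a : ℤ) (t : List ℤ) : hjcf (e :: a :: t) = (e:ℚ) - 1 / hjcf (a :: t) := rfl

lemma one_lt_hjcf : ∀ l : List ℤ, l ≠ [] → (∀ e ∈ l, 2 ≤ e) → 1 < hjcf l
  | [], h, _ => absurd rfl h
  | [e], _, h2 => by
      have := h2 e (by simp)
      simp only [hjcf]
      exact_mod_cast lt_of_lt_of_le one_lt_two (by exact_mod_cast this)
  | e :: a :: t, _, h2 => by
      have ih : 1 < hjcf (a :: t) := one_lt_hjcf (a :: t) (by simp) (fun x hx => h2 x (by simp [hx]))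
      have he : (2:ℚ) ≤ (e:ℚ) := by exact_mod_cast h2 e (by simp)
      rw [hjcf_cons]
      have h1 : 1 / hjcf (a :: t) < 1 := by
        rw [div_lt_one (by linarith)]; linarith
      linarith

/-- Increase the first entry of a list by 1. -/
def incFirst : List ℤ → List ℤ
  | [] => []
  | e :: t => (e + 1) :: t

/-- The Riemenschneider dual of a Hirzebruch–Jung expansion. -/
def dual : List ℤ → List ℤ
  | [] => []
  | [e] => List.replicate (e - 1).toNat 2
  | e :: rest => List.replicate (e - 2).toNat 2 ++ incFirst (dual rest)

lemma dual_cons (e a : ℤ) (t : List ℤ) :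
    dual (e :: a :: t) = List.replicate (e - 2).toNat 2 ++ incFirst (dual (a :: t)) := rfl

lemma hjcf_incFirst : ∀ t : List ℤ, t ≠ [] → hjcf (incFirst t) = hjcf t + 1
  | [], h => absurd rfl h
  | [e], _ => by simp only [incFirst, hjcf]; push_cast; ring
  | e :: a :: t, _ => by
      simp only [incFirst, hjcf_cons]; push_cast; ring

lemma hjcf_rep2 (t : List ℤ) (ht : t ≠ []) (h2 : ∀ e ∈ t, 2 ≤ e) : ∀ n : ℕ,
    hjcf (List.replicate n 2 ++ t) = ((n + 1) * hjcf t - n) / (n * hjcf t - n + 1)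
  | 0 => by
      have hx : 1 < hjcf t := one_lt_hjcf t ht h2
      simp
  | n + 1 => by
      have hx : 1 < hjcf t := one_lt_hjcf t ht h2
      have ih := hjcf_rep2 t ht h2 n
      have hnum : (0:ℚ) < (n + 1) * hjcf t - n := by nlinarith
      have hden : (0:ℚ) < n * hjcf t - n + 1 := by nlinarith
      have hprev : 0 < hjcf (List.replicate n 2 ++ t) := by rw [ih]; positivity
      have hcons : ∃ a s, List.replicate n 2 ++ t = a :: s := by
        cases h : List.replicate n 2 ++ t with
        | nil => exact absurd (List.append_eq_nil_iff.mp h).2 ht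
        | cons a s => exact ⟨a, s, rfl⟩
      obtain ⟨a, s, hs⟩ := hcons
      have : List.replicate (n+1) 2 ++ t = 2 :: (List.replicate n 2 ++ t) := by
        simp [List.replicate_succ]
      rw [this, hs, hjcf_cons, ← hs, ih]
      have hd2 : ((n:ℚ) + 1) * hjcf t - n ≠ 0 := ne_of_gt hnum
      rw [one_div_div]
      push_cast
      rw [sub_div' hd2, div_eq_div_iff (by nlinarith) (by nlinarith)]
      ring

lemma dual_ne_nil : ∀ l : List ℤ, l ≠ [] → (∀ e ∈ l, 2 ≤ e) → dual l ≠ []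
  | [], h, _ => absurd rfl h
  | [e], _, h2 => by
      have := h2 e (by simp)
      simp only [dual, ne_eq, List.replicate_eq_nil_iff]
      omega
  | e :: a :: t, _, h2 => by
      have ih := dual_ne_nil (a :: t) (by simp) (fun x hx => h2 x (by simp [hx]))
      rw [dual_cons]
      cases h : dual (a :: t) with
      | nil => exact absurd h ih
      | cons b s => simp [incFirst]

lemma dual_mem : ∀ l : List ℤ, l ≠ [] → (∀ e ∈ l, 2 ≤ e) → ∀ e ∈ dual l, 2 ≤ e
  | [], h, _ => absurd rfl h
  | [e], _, h2 => by
      simp only [dual]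
      intro x hx
      simp [List.eq_of_mem_replicate hx]
  | e :: a :: t, _, h2 => by
      have ih := dual_mem (a :: t) (by simp) (fun x hx => h2 x (by simp [hx]))
      rw [dual_cons]
      intro x hx
      rcases List.mem_append.mp hx with h | h
      · simp [List.eq_of_mem_replicate h]
      · cases hd : dual (a :: t) with
        | nil => simp [hd, incFirst] at h
        | cons b s =>
            rw [hd] at h
            simp only [incFirst] at h
            rcases List.mem_cons.mp h with rfl | h
            · have := ih b (by simp [hd]); omega
            · exact ih x (by simp [hd, h])

lemma incFirst_length (t : List ℤ) : (incFirst t).length = t.length := by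
  cases t <;> simp [incFirst]

lemma dual_length : ∀ l : List ℤ, l ≠ [] → (∀ e ∈ l, 2 ≤ e) →
    ((dual l).length : ℤ) = 1 + (l.map (fun e => e - 2)).sum
  | [], h, _ => absurd rfl h
  | [e], _, h2 => by
      have := h2 e (by simp)
      simp only [dual, List.length_replicate, List.map_cons, List.map_nil, List.sum_cons,
        List.sum_nil]
      omega
  | e :: a :: t, _, h2 => by
      have ih := dual_length (a :: t) (by simp) (fun x hx => h2 x (by simp [hx]))
      have he := h2 e (by simp)
      rw [dual_cons]
      simp only [List.length_append, List.length_replicate, incFirst_length, List.map_cons,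
        List.sum_cons] at *
      omega

lemma incFirst_sum (t : List ℤ) (ht : t ≠ []) :
    ((incFirst t).map (fun e => e - 1)).sum = (t.map (fun e => e - 1)).sum + 1 := by
  cases t with
  | nil => exact absurd rfl ht
  | cons a s => simp [incFirst]; ring

lemma dual_sum : ∀ l : List ℤ, l ≠ [] → (∀ e ∈ l, 2 ≤ e) →
    ((dual l).map (fun e => e - 1)).sum = (l.map (fun e => e - 1)).sum
  | [], h, _ => absurd rfl h
  | [e], _, h2 => by
      have := h2 e (by simp)
      simp only [dual, List.map_replicate, List.sum_replicate, List.map_cons, List.map_nil,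
        List.sum_cons, List.sum_nil, smul_eq_mul, nsmul_eq_mul]
      omega
  | e :: a :: t, _, h2 => by
      have hne := dual_ne_nil (a :: t) (by simp) (fun x hx => h2 x (by simp [hx]))
      have ih := dual_sum (a :: t) (by simp) (fun x hx => h2 x (by simp [hx]))
      have he := h2 e (by simp)
      rw [dual_cons]
      rw [List.map_append, List.sum_append, incFirst_sum _ hne, ih]
      simp only [List.map_replicate, List.sum_replicate, List.map_cons, List.sum_cons,
        smul_eq_mul, nsmul_eq_mul]
      omega

lemma incFirst_mem (t : List ℤ) (h2 : ∀ e ∈ t, 2 ≤ e) : ∀ e ∈ incFirst t, 2 ≤ e := by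
  cases t with
  | nil => simp [incFirst]
  | cons a s =>
      intro x hx
      simp only [incFirst, List.mem_cons] at hx
      rcases hx with rfl | hx
      · have := h2 a (by simp); omega
      · exact h2 x (by simp [hx])

lemma dual_val : ∀ l : List ℤ, l ≠ [] → (∀ e ∈ l, 2 ≤ e) →
    hjcf (dual l) = hjcf l / (hjcf l - 1)
  | [], h, _ => absurd rfl h
  | [e], _, h2 => by
      have he := h2 e (by simp)
      obtain ⟨m, hm⟩ : ∃ m, (e - 1).toNat = m + 1 := ⟨(e-2).toNat, by omega⟩
      have hmz : (m : ℤ) = e - 2 := by omega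
      have hmq : (m : ℚ) = (e : ℚ) - 2 := by exact_mod_cast hmz
      have h2q : (2:ℚ) ≤ (e:ℚ) := by exact_mod_cast he
      show hjcf (List.replicate (e-1).toNat 2) = hjcf [e] / (hjcf [e] - 1)
      rw [hm, List.replicate_succ', hjcf_rep2 [2] (by simp) (by simp)]
      have h22 : hjcf [2] = 2 := by simp [hjcf]
      have heq : hjcf [e] = (e : ℚ) := by simp [hjcf]
      rw [h22, heq, hmq]
      rw [div_eq_div_iff (by nlinarith) (by nlinarith)]
      ring
  | e :: a :: t, _, h2 => by
      have h2' : ∀ x ∈ a :: t, 2 ≤ x := fun x hx => h2 x (by simp [hx])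
      have hne := dual_ne_nil (a :: t) (by simp) h2'
      have hmem := dual_mem (a :: t) (by simp) h2'
      have ih := dual_val (a :: t) (by simp) h2'
      have hx : 1 < hjcf (a :: t) := one_lt_hjcf (a :: t) (by simp) h2'
      set x := hjcf (a :: t) with hxdef
      have he := h2 e (by simp)
      have h2q : (2:ℚ) ≤ (e:ℚ) := by exact_mod_cast he
      have hv : 1 < hjcf (e :: a :: t) := one_lt_hjcf _ (by simp) h2
      rw [dual_cons]
      have hmemI : ∀ y ∈ incFirst (dual (a :: t)), 2 ≤ y := incFirst_mem _ hmem
      have hneI : incFirst (dual (a :: t)) ≠ [] := by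
        cases hd : dual (a :: t) with
        | nil => exact absurd hd hne
        | cons b s => simp [hd, incFirst]
      rw [hjcf_rep2 _ hneI hmemI ((e-2).toNat)]
      rw [hjcf_incFirst _ hne, ih]
      have hn : ((e - 2).toNat : ℚ) = (e : ℚ) - 2 := by
        have : ((e - 2).toNat : ℤ) = e - 2 := Int.toNat_of_nonneg (by omega)
        exact_mod_cast this
      rw [hn, hjcf_cons, ← hxdef]
      have hx0 : x ≠ 0 := by linarith
      have hx1 : x - 1 ≠ 0 := by intro h; rw [sub_eq_zero] at h; exact absurd h.symm (ne_of_lt hx)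
      have hv' : 1 < (e:ℚ) - 1 / x := by rw [hjcf_cons, ← hxdef] at hv; exact hv
      have hvne : (e:ℚ) - 1 / x - 1 ≠ 0 := by linarith
      have key1 : ((e:ℚ) - 1) * x - 1 > 0 := by nlinarith
      have key2 : (e:ℚ) * x - 1 > 0 := by nlinarith
      field_simp
      rw [div_eq_div_iff (by nlinarith) (by nlinarith)]
      ring

lemma hjcf_bounds (e a : ℤ) (t : List ℤ) (h2 : ∀ x ∈ e :: a :: t, 2 ≤ x) :
    (e:ℚ) - 1 < hjcf (e :: a :: t) ∧ hjcf (e :: a :: t) < e := by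
  have hx : 1 < hjcf (a :: t) := one_lt_hjcf _ (by simp) (fun x hx => h2 x (by simp [hx]))
  rw [hjcf_cons]
  have h1 : 0 < 1 / hjcf (a :: t) := by positivity
  have h2' : 1 / hjcf (a :: t) < 1 := by rw [div_lt_one (by linarith)]; exact hx
  constructor <;> linarith

lemma hjcf_inj : ∀ l l' : List ℤ, l ≠ [] → l' ≠ [] →
    (∀ e ∈ l, 2 ≤ e) → (∀ e ∈ l', 2 ≤ e) → hjcf l = hjcf l' → l = l'
  | [], _, h, _, _, _, _ => absurd rfl h
  | _ :: _, [], _, h, _, _, _ => absurd rfl h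
  | [e], [e'], _, _, _, _, heq => by
      have : (e:ℚ) = (e':ℚ) := heq
      have : e = e' := by exact_mod_cast this
      rw [this]
  | [e], e' :: a' :: t', _, _, h2, h2', heq => by
      obtain ⟨hlo, hhi⟩ := hjcf_bounds e' a' t' h2'
      have heqq : hjcf [e] = (e:ℚ) := by simp [hjcf]
      rw [heq] at heqq
      have hlo' : (e':ℤ) - 1 < e := by exact_mod_cast heqq ▸ hlo
      have hhi' : (e:ℤ) < e' := by exact_mod_cast heqq ▸ hhi
      omega
  | e :: a :: t, [e'], _, _, h2, h2', heq => by
      obtain ⟨hlo, hhi⟩ := hjcf_bounds e a t h2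
      have heqq : hjcf [e'] = (e':ℚ) := by simp [hjcf]
      rw [← heq] at heqq
      have hlo' : (e:ℤ) - 1 < e' := by exact_mod_cast heqq ▸ hlo
      have hhi' : (e':ℤ) < e := by exact_mod_cast heqq ▸ hhi
      omega
  | e :: a :: t, e' :: a' :: t', _, _, h2, h2', heq => by
      obtain ⟨hlo, hhi⟩ := hjcf_bounds e a t h2
      obtain ⟨hlo', hhi'⟩ := hjcf_bounds e' a' t' h2'
      rw [heq] at hlo hhi
      have he : e = e' := by
        have h1 : ((e:ℚ) - 1) < e' := lt_trans hlo (by exact_mod_cast hhi')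
        have h2 : ((e':ℚ) - 1) < e := lt_trans hlo' (by exact_mod_cast hhi)
        have h1' : (e:ℤ) - 1 < e' := by exact_mod_cast h1
        have h2' : (e':ℤ) - 1 < e := by exact_mod_cast h2
        omega
      subst he
      have hx : 1 < hjcf (a :: t) := one_lt_hjcf _ (by simp) (fun x hx => h2 x (by simp [hx]))
      have hx' : 1 < hjcf (a' :: t') := one_lt_hjcf _ (by simp) (fun x hx => h2' x (by simp [hx]))
      have : hjcf (a :: t) = hjcf (a' :: t') := by
        rw [hjcf_cons, hjcf_cons] at heq
        have h1 : 1 / hjcf (a :: t) = 1 / hjcf (a' :: t') := by linarith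
        field_simp at h1
        exact h1.symm
      have := hjcf_inj (a :: t) (a' :: t') (by simp) (by simp)
        (fun x hx => h2 x (by simp [hx])) (fun x hx => h2' x (by simp [hx])) this
      rw [this]

/-- Riemenschneider duality: for coprime `p > q ≥ 1` and `q' = p - q`, if
`p/q = [e₁,…,e_k]` and `p/q' = [e'₁,…,e'_{k'}]` are Hirzebruch–Jung expansions,
then `∑ (eᵢ - 1) = ∑ (e'ᵢ - 1)` and `k' = 1 + ∑ (eᵢ - 2)`. -/
theorem stmt2 (p q q' : ℕ) (hq : 1 ≤ q) (hpq : q < p) (hcop : Nat.Coprime p q)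
    (hq' : q' = p - q)
    (l l' : List ℤ) (hl : l ≠ []) (hl' : l' ≠ [])
    (hle : ∀ e ∈ l, 2 ≤ e) (hle' : ∀ e ∈ l', 2 ≤ e)
    (hexp : hjcf l = (p : ℚ) / (q : ℚ)) (hexp' : hjcf l' = (p : ℚ) / (q' : ℚ)) :
    (l.map (fun e => e - 1)).sum = (l'.map (fun e => e - 1)).sum ∧
      (l'.length : ℤ) = 1 + (l.map (fun e => e - 2)).sum := by
  have hq0 : (0:ℚ) < q := by exact_mod_cast hq
  have hpq' : q ≤ p := hpq.le
  have hq'Q : (q':ℚ) = (p:ℚ) - q := by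
    rw [hq']
    exact_mod_cast Nat.cast_sub hpq' (R := ℚ)
  have hsub0 : (0:ℚ) < (p:ℚ) - q := by
    have : (q:ℚ) < p := by exact_mod_cast hpq
    linarith
  have hval : hjcf (dual l) = hjcf l' := by
    rw [dual_val l hl hle, hexp, hexp', hq'Q]
    have h1 : (p:ℚ)/q - 1 = ((p:ℚ) - q)/q := by field_simp
    rw [h1, div_div_div_cancel_right₀ (ne_of_gt hq0) (p:ℚ) ((p:ℚ) - q)]
  have hdl : dual l = l' := hjcf_inj _ _ (dual_ne_nil l hl hle) hl' (dual_mem l hl hle) hle' hval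
  constructor
  · rw [← hdl]
    exact (dual_sum l hl hle).symm
  · rw [← hdl]
    exact dual_length l hl hle
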